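/- Let Δ be an i-near-cone with apex sequence v_1, …, v_i, and suppose dim Δ ≥ 2i − 2 (i.e., Δ has a face of cardinality at least 2i − 1). Then {v_1, v_2, …, v_i} is a face of Δ. -/

import Mathlib

/-- If `Δ` is an `i`-near-cone with apex sequence `v 0, …, v (i-1)` and
`dim Δ ≥ 2i - 2` (i.e. `Δ` has a face of cardinality at least `2i - 1`),
then `{v 0, …, v (i-1)}` is a face of `Δ`. -/
theorem apex_is_face_of_i_near_cone (i : ℕ) (Δ : Set (Finset ℕ))
    (D : ℕ → Set (Finset ℕ)) (v : ℕ → ℕ)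
    (hD0 : D 0 = Δ)
    (hdown : ∀ j ≤ i, ∀ s ∈ D j, ∀ s' ⊆ s, s' ∈ D j)
    (hne : ∀ j ≤ i, (D j).Nonempty)
    (hvert : ∀ j < i, ({v j} : Finset ℕ) ∈ D j)
    (hnc : ∀ j < i, ∀ σ ∈ D j, ∀ w ∈ σ, insert (v j) (σ.erase w) ∈ D j)
    (hast : ∀ j < i, D (j + 1) = {τ ∈ D j | v j ∉ τ})
    (hdim : ∃ σ ∈ Δ, 2 * i - 1 ≤ σ.card) :
    (Finset.range i).image v ∈ Δ := by
  -- Key claim, by induction on k = i - j: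
  have key : ∀ k j, j + k = i → 1 ≤ k → ∀ t : ℕ,
      (∃ σ ∈ D j, 2 * k - 1 + t ≤ σ.card) →
      ∃ ρ ∈ D j, (Finset.Ico j i).image v ⊆ ρ ∧ k + t ≤ ρ.card := by
    intro k
    induction k with
    | zero => intro j _ hk; omega
    | succ k ih =>
      rintro j hji - t ⟨σ, hσ, hcard⟩
      have hjlt : j < i := by omega
      rcases Nat.eq_zero_or_pos k with hk0 | hk1
      · -- base case k + 1 = 1, i.e. j = i - 1
        subst hk0
        have hIco : Finset.Ico j i = {j} := by
          have : i = j + 1 := by omega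
          subst this
          simp
        by_cases hv : v j ∈ σ
        · refine ⟨σ, hσ, ?_, by omega⟩
          rw [hIco]
          intro x hx
          simp only [Finset.image_singleton, Finset.mem_singleton] at hx
          simpa [hx] using hv
        · obtain ⟨w, hw⟩ : σ.Nonempty := Finset.card_pos.mp (by omega)
          refine ⟨insert (v j) (σ.erase w), hnc j hjlt σ hσ w hw, ?_, ?_⟩
          · rw [hIco]
            intro x hx
            simp only [Finset.image_singleton, Finset.mem_singleton] at hx
            simp [hx]
          · have hvnot : v j ∉ σ.erase w := fun h => hv (Finset.mem_of_mem_erase h)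
            rw [Finset.card_insert_of_notMem hvnot, Finset.card_erase_of_mem hw]
            omega
      · -- inductive step
        have hσ' : σ.erase (v j) ∈ D (j + 1) := by
          rw [hast j hjlt]
          exact ⟨hdown j hjlt.le σ hσ _ (Finset.erase_subset _ _),
            Finset.notMem_erase _ _⟩
        have hcard' : 2 * k - 1 + (t + 1) ≤ (σ.erase (v j)).card := by
          have h1 : σ.card - 1 ≤ (σ.erase (v j)).card := Finset.pred_card_le_card_erase
          omega
        obtain ⟨ρ', hρ'D, hρ'sub, hρ'card⟩ :=
          ih (j + 1) (by omega) (by omega) (t + 1) ⟨_, hσ', hcard'⟩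
        have hρ'j : ρ' ∈ D j ∧ v j ∉ ρ' := by
          have := hρ'D
          rw [hast j hjlt] at this
          exact this
        have hTcard : ((Finset.Ico (j + 1) i).image v).card ≤ k := by
          refine le_trans Finset.card_image_le ?_
          rw [Nat.card_Ico]
          omega
        have hex : ∃ w ∈ ρ', w ∉ (Finset.Ico (j + 1) i).image v := by
          by_contra hcon
          push_neg at hcon
          have hsub : ρ' ⊆ (Finset.Ico (j + 1) i).image v := hcon
          have := Finset.card_le_card hsub
          omega
        obtain ⟨w, hwρ, hwT⟩ := hex
        refine ⟨insert (v j) (ρ'.erase w), hnc j hjlt ρ' hρ'j.1 w hwρ, ?_, ?_⟩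
        · intro x hx
          simp only [Finset.mem_image, Finset.mem_Ico] at hx
          obtain ⟨a, ⟨ha1, ha2⟩, rfl⟩ := hx
          rcases eq_or_lt_of_le ha1 with rfl | haj
          · exact Finset.mem_insert_self _ _
          · have hmem : v a ∈ (Finset.Ico (j + 1) i).image v := by
              simp only [Finset.mem_image, Finset.mem_Ico]
              exact ⟨a, ⟨haj, ha2⟩, rfl⟩
            have hne' : v a ≠ w := fun h => hwT (h ▸ hmem)
            exact Finset.mem_insert_of_mem
              (Finset.mem_erase.mpr ⟨hne', hρ'sub hmem⟩)
        · have hvnot : v j ∉ ρ'.erase w := fun h => hρ'j.2 (Finset.mem_of_mem_erase h)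
          rw [Finset.card_insert_of_notMem hvnot, Finset.card_erase_of_mem hwρ]
          have : 1 ≤ ρ'.card := Finset.card_pos.mpr ⟨w, hwρ⟩
          omega
  rcases Nat.eq_zero_or_pos i with hi0 | hi1
  · subst hi0
    simp only [Finset.range_zero, Finset.image_empty]
    obtain ⟨s, hs⟩ := hne 0 le_rfl
    rw [← hD0]
    exact hdown 0 le_rfl s hs ∅ (Finset.empty_subset _)
  · obtain ⟨σ, hσΔ, hσc⟩ := hdim
    obtain ⟨ρ, hρD, hρsub, -⟩ := key i 0 (by omega) hi1 0
      ⟨σ, by rw [hD0]; exact hσΔ, by omega⟩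
    rw [← hD0]
    have : (Finset.range i).image v ⊆ ρ := by
      rwa [Finset.range_eq_Ico]
    exact hdown 0 (Nat.zero_le _) ρ hρD _ this
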